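/- Let ξ be a complex non-real algebraic number of degree d > 1. Then t_{d-1}(ξ) ≤ d/2, where t_{d-1}(ξ) is the maximum over μ ∈ ℂ* of the dimension of the space of rational polynomials f of degree at most d−1 with μ·f(ξ) real. -/
import Mathlib

open Polynomial IntermediateField Module

/-- The ℚ-vector space of polynomials `f ∈ ℚ[X]` of degree at most `n`
with `μ * f(ξ) ∈ ℝ`. -/
noncomputable def Vspace (n : ℕ) (μ ξ : ℂ) : Submodule ℚ ℚ[X] where
  carrier := {f | f.natDegree ≤ n ∧ ∃ r : ℝ, μ * aeval ξ f = (r : ℂ)}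
  zero_mem' := ⟨by simp, 0, by simp⟩
  add_mem' := by
    rintro f g ⟨hf, r, hr⟩ ⟨hg, s, hs⟩
    refine ⟨(natDegree_add_le f g).trans (by simp [hf, hg]), r + s, ?_⟩
    push_cast
    rw [map_add, mul_add, hr, hs]
  smul_mem' := by
    rintro c f ⟨hf, r, hr⟩
    refine ⟨(natDegree_smul_le c f).trans hf, c * r, ?_⟩
    rw [map_smul, Algebra.mul_smul_comm, hr, Rat.smul_def]
    push_cast
    ring

/-- `t_n(ξ)`: the maximum over nonzero `μ ∈ ℂ` of `dim_ℚ V_n(μ,ξ)`. -/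
noncomputable def tdeg (n : ℕ) (ξ : ℂ) : ℕ :=
  sSup {d : ℕ | ∃ μ : ℂ, μ ≠ 0 ∧ d = Module.finrank ℚ (Vspace n μ ξ)}

lemma conj_aeval (ξ : ℂ) (f : ℚ[X]) :
    (starRingEnd ℂ) (aeval ξ f) = aeval ((starRingEnd ℂ) ξ) f := by
  simpa using (Polynomial.aeval_algHom_apply
    ((Complex.conjAe).toAlgHom.restrictScalars ℚ) ξ f).symm

set_option maxHeartbeats 1000000 in
set_option synthInstance.maxHeartbeats 400000 in
lemma key_bound (ξ : ℂ) (hξreal : ξ.im ≠ 0) (hξalg : IsAlgebraic ℚ ξ)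
    (d : ℕ) (hd : d = (minpoly ℚ ξ).natDegree) (hd1 : 1 < d)
    (μ : ℂ) (hμ : μ ≠ 0) :
    2 * Module.finrank ℚ (Vspace (d - 1) μ ξ) ≤ d := by
  set V := Vspace (d - 1) μ ξ with hVdef
  by_cases hV : V = ⊥
  · rw [hV, finrank_bot]; omega
  obtain ⟨g₀, hg₀V, hg₀⟩ := Submodule.exists_mem_ne_zero_of_ne_bot hV
  have hint : IsIntegral ℚ ξ := hξalg.isIntegral
  haveI : FiniteDimensional ℚ ℚ⟮ξ⟯ := IntermediateField.adjoin.finiteDimensional hint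
  have hKrank : finrank ℚ ℚ⟮ξ⟯ = d := by rw [hd]; exact IntermediateField.adjoin.finrank hint
  set gen := AdjoinSimple.gen ℚ ξ with hgendef
  have hgen : (ℚ⟮ξ⟯.val) gen = ξ := AdjoinSimple.algebraMap_gen ℚ ξ
  set τ : ℂ →ₐ[ℚ] ℂ := (Complex.conjAe).toAlgHom.restrictScalars ℚ with hτdef
  have hτ : ∀ z : ℂ, τ z = (starRingEnd ℂ) z := fun z => rfl
  set σ : ℚ⟮ξ⟯ →ₐ[ℚ] ℂ := τ.comp ℚ⟮ξ⟯.val with hσdef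
  have hσval : ∀ x : ℚ⟮ξ⟯, σ x = (starRingEnd ℂ) (ℚ⟮ξ⟯.val x) := fun x => rfl
  -- evaluation fact
  have hval : ∀ f : ℚ[X], (ℚ⟮ξ⟯.val) (aeval gen f) = aeval ξ f := by
    intro f
    rw [← Polynomial.aeval_algHom_apply, hgen]
  -- nonvanishing
  have hnv : ∀ f : ℚ[X], f ∈ V → f ≠ 0 → aeval ξ f ≠ 0 := by
    intro f hf hf0 h0
    have hdvd := minpoly.dvd ℚ ξ h0
    have := Polynomial.natDegree_le_of_dvd hdvd hf0
    have hle := hf.1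
    omega
  -- conjugation relation
  have hconj : ∀ f : ℚ[X], f ∈ V →
      (starRingEnd ℂ) μ * (starRingEnd ℂ) (aeval ξ f) = μ * aeval ξ f := by
    intro f hf
    obtain ⟨r, hr⟩ := hf.2
    have h := congrArg (starRingEnd ℂ) hr
    rw [map_mul, Complex.conj_ofReal] at h
    rw [h, hr]
  -- the fixed field
  have hLinv : ∀ x ∈ AlgHom.equalizer σ ℚ⟮ξ⟯.val, x⁻¹ ∈ AlgHom.equalizer σ ℚ⟮ξ⟯.val := by
    intro x hx
    have hx' : σ x = ℚ⟮ξ⟯.val x := hx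
    show σ x⁻¹ = ℚ⟮ξ⟯.val x⁻¹
    rw [map_inv₀, map_inv₀, hx']
  set L : IntermediateField ℚ ℚ⟮ξ⟯ :=
    (AlgHom.equalizer σ ℚ⟮ξ⟯.val).toIntermediateField hLinv with hLdef
  have hmemL : ∀ x : ℚ⟮ξ⟯, x ∈ L ↔ σ x = ℚ⟮ξ⟯.val x := fun x => Iff.rfl
  -- the denominator
  set c : ℚ⟮ξ⟯ := aeval gen g₀ with hcdef
  have hcval : (ℚ⟮ξ⟯.val) c = aeval ξ g₀ := hval g₀
  have hG : aeval ξ g₀ ≠ 0 := hnv g₀ hg₀V hg₀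
  have hc : c ≠ 0 := by
    intro h0
    exact hG (by rw [← hcval, h0, map_zero])
  -- membership of images in L
  have memL : ∀ f : ℚ[X], f ∈ V → aeval gen f * c⁻¹ ∈ L := by
    intro f hf
    rw [hmemL, hσval, map_mul, map_mul, map_inv₀, map_inv₀, hval, hcval]
    have h1 := hconj f hf
    have h2 := hconj g₀ hg₀V
    have hG' : (starRingEnd ℂ) (aeval ξ g₀) ≠ 0 := by simpa using hG
    have hμ' : (starRingEnd ℂ) μ ≠ 0 := by simpa using hμ
    have key : (starRingEnd ℂ) (aeval ξ f) * aeval ξ g₀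
        = aeval ξ f * (starRingEnd ℂ) (aeval ξ g₀) := by
      apply mul_left_cancel₀ hμ'
      linear_combination (aeval ξ g₀) * h1 - (aeval ξ f) * h2
    field_simp
    linear_combination key
  -- the injective linear map V →ₗ L
  let ψ : ↥V →ₗ[ℚ] ↥L :=
    { toFun := fun f => ⟨aeval gen f.1 * c⁻¹, memL f.1 f.2⟩
      map_add' := by
        intro f g
        apply Subtype.ext
        show aeval gen (f.1 + g.1) * c⁻¹ = aeval gen f.1 * c⁻¹ + aeval gen g.1 * c⁻¹
        rw [map_add, add_mul]
      map_smul' := by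
        intro q f
        apply Subtype.ext
        show aeval gen (q • f.1) * c⁻¹ = q • (aeval gen f.1 * c⁻¹)
        rw [Polynomial.smul_eq_C_mul, map_mul, aeval_C, mul_assoc, ← Algebra.smul_def] }
  have hψinj : Function.Injective ψ := by
    rw [← LinearMap.ker_eq_bot, Submodule.eq_bot_iff]
    intro f hf
    have h0 : aeval gen f.1 * c⁻¹ = 0 := congrArg Subtype.val hf
    have : aeval gen f.1 = 0 := by
      rcases mul_eq_zero.mp h0 with h | h
      · exact h
      · exact absurd h (inv_ne_zero hc)
    have hfe : aeval ξ f.1 = 0 := by rw [← hval, this, map_zero]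
    have hf0 : f.1 = 0 := by
      by_contra hne
      exact hnv f.1 f.2 hne hfe
    exact Subtype.ext hf0
  haveI : FiniteDimensional ℚ ↥L := inferInstance
  have h1 : finrank ℚ ↥V ≤ finrank ℚ ↥L :=
    LinearMap.finrank_le_finrank_of_injective hψinj
  -- [K : L] ≥ 2
  haveI : FiniteDimensional ↥L ↥ℚ⟮ξ⟯ := FiniteDimensional.right ℚ ↥L ↥ℚ⟮ξ⟯
  have hne1 : finrank ↥L ↥ℚ⟮ξ⟯ ≠ 1 := by
    intro h1'
    have hbt : (⊥ : Subalgebra ↥L ↥ℚ⟮ξ⟯) = ⊤ :=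
      Subalgebra.bot_eq_top_of_finrank_eq_one h1'
    have hgenbot : gen ∈ (⊥ : Subalgebra ↥L ↥ℚ⟮ξ⟯) := hbt ▸ trivial
    obtain ⟨l, hl⟩ := Algebra.mem_bot.mp hgenbot
    have hlL : σ (l : ℚ⟮ξ⟯) = ℚ⟮ξ⟯.val (l : ℚ⟮ξ⟯) := l.2
    have halg : algebraMap ↥L ↥ℚ⟮ξ⟯ l = (l : ℚ⟮ξ⟯) := rfl
    rw [halg] at hl
    have : σ gen = ℚ⟮ξ⟯.val gen := by rw [← hl]; exact hlL
    rw [hσval, hgen] at this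
    exact hξreal (Complex.conj_eq_iff_im.mp this)
  have hpos : 0 < finrank ↥L ↥ℚ⟮ξ⟯ := finrank_pos
  have h2 : 2 ≤ finrank ↥L ↥ℚ⟮ξ⟯ := by omega
  have hmul : finrank ℚ ↥L * finrank ↥L ↥ℚ⟮ξ⟯ = finrank ℚ ℚ⟮ξ⟯ :=
    Module.finrank_mul_finrank ℚ ↥L ↥ℚ⟮ξ⟯
  calc 2 * finrank ℚ ↥V ≤ 2 * finrank ℚ ↥L := by omega
    _ ≤ finrank ℚ ↥L * finrank ↥L ↥ℚ⟮ξ⟯ := by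
        rw [mul_comm 2]
        exact Nat.mul_le_mul_left _ h2
    _ = d := by rw [hmul, hKrank]

theorem tdeg_le_half_degree (ξ : ℂ) (hξreal : ξ.im ≠ 0) (hξalg : IsAlgebraic ℚ ξ)
    (d : ℕ) (hd : d = (minpoly ℚ ξ).natDegree) (hd1 : 1 < d) :
    2 * tdeg (d - 1) ξ ≤ d := by
  set S := {k : ℕ | ∃ μ : ℂ, μ ≠ 0 ∧ k = Module.finrank ℚ (Vspace (d - 1) μ ξ)} with hS
  have hbound : ∀ k ∈ S, 2 * k ≤ d := by
    rintro k ⟨μ, hμ, rfl⟩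
    exact key_bound ξ hξreal hξalg d hd hd1 μ hμ
  have hne : S.Nonempty := ⟨_, 1, one_ne_zero, rfl⟩
  have hbdd : BddAbove S := ⟨d, fun k hk => by have := hbound k hk; omega⟩
  have hmem : sSup S ∈ S := Nat.sSup_mem hne hbdd
  exact hbound _ hmem
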